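/- Let α > 0, let a, b : {1, 2, 3, …} → {0, 1} be binary digit sequences, and let N₀ ≥ 2 be such that a_n = b_n for all 1 ≤ n ≤ N₀ − 1. Then the telescoping identity Σ_{n=1}^{N₀−1} u_n / sinh(α·2^(−n+1)) = v_1 / sinh(α) − v_{N₀} / sinh(α·2^(−N₀+1)) holds. -/

import Mathlib

/-- The tail sum `Σ_{i=n}^∞ a_i·2^(−i)` of a binary digit sequence `a` (digits `a i ∈ {0,1}`). -/
noncomputable def binTail (a : ℕ → ℕ) (n : ℕ) : ℝ :=
  ∑' i : ℕ, (a (n + i) : ℝ) * 2 ^ (-((n : ℤ) + (i : ℤ)))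

/-- `v_n = sinh(α·Σ_{i=n}^∞ a_i·2^(−i))·sinh(α·Σ_{i=n}^∞ (1 − b_i)·2^(−i))`. -/
noncomputable def vSeq (α : ℝ) (a b : ℕ → ℕ) (n : ℕ) : ℝ :=
  Real.sinh (α * binTail a n) * Real.sinh (α * binTail (fun i => 1 - b i) n)

/-- `u_n = sinh(α·Σ_{i=n+1}^∞ a_i·2^(−i))·sinh(α·Σ_{i=n+1}^∞ b_i·2^(−i))` when `a_n = b_n = 0`,
`u_n = sinh(α·Σ_{i=n+1}^∞ (1−a_i)·2^(−i))·sinh(α·Σ_{i=n+1}^∞ (1−b_i)·2^(−i))` when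
`a_n = b_n = 1` (only used when `a_n = b_n`). -/
noncomputable def uSeq (α : ℝ) (a b : ℕ → ℕ) (n : ℕ) : ℝ :=
  if a n = 0 then
    Real.sinh (α * binTail a (n + 1)) * Real.sinh (α * binTail b (n + 1))
  else
    Real.sinh (α * binTail (fun i => 1 - a i) (n + 1)) *
      Real.sinh (α * binTail (fun i => 1 - b i) (n + 1))

lemma two_zpow_split (n i : ℕ) :
    (2:ℝ) ^ (-((n : ℤ) + (i : ℤ))) = 2 ^ (-(n:ℤ)) * (1/2:ℝ) ^ i := by
  rw [neg_add, zpow_add₀ (two_ne_zero)]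
  simp [zpow_neg, zpow_natCast, inv_pow, one_div]

lemma half_summable : Summable (fun i : ℕ => (1/2:ℝ)^i) :=
  summable_geometric_of_lt_one (by norm_num) (by norm_num)

lemma binTail_summable (a : ℕ → ℕ) (ha : ∀ i, a i ≤ 1) (n : ℕ) :
    Summable (fun i : ℕ => (a (n + i) : ℝ) * 2 ^ (-((n : ℤ) + (i : ℤ)))) := by
  refine Summable.of_nonneg_of_le (fun i => by positivity) ?_
    (half_summable.mul_left ((2:ℝ) ^ (-(n:ℤ))))
  intro i
  have h1 : ((a (n + i) : ℝ)) ≤ 1 := by exact_mod_cast ha (n+i)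
  rw [two_zpow_split]
  have h : (0:ℝ) ≤ 2 ^ (-(n:ℤ)) * (1/2:ℝ) ^ i := by positivity
  nlinarith [h]

lemma binTail_tsum_pow (n : ℕ) :
    ∑' i : ℕ, (2:ℝ) ^ (-((n : ℤ) + (i : ℤ))) = 2 ^ (-(n:ℤ) + 1) := by
  simp only [two_zpow_split]
  rw [tsum_mul_left, tsum_geometric_of_lt_one (by norm_num) (by norm_num)]
  rw [zpow_add₀ (two_ne_zero : (2:ℝ) ≠ 0)]
  norm_num

lemma binTail_split (a : ℕ → ℕ) (ha : ∀ i, a i ≤ 1) (n : ℕ) :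
    binTail a n = (a n : ℝ) * 2 ^ (-(n:ℤ)) + binTail a (n+1) := by
  unfold binTail
  rw [Summable.tsum_eq_zero_add (binTail_summable a ha n)]
  have h0 : ((a (n+0):ℝ)) * 2 ^ (-((n:ℤ)+((0:ℕ):ℤ))) = (a n : ℝ) * 2 ^ (-(n:ℤ)) := by norm_num
  rw [h0]
  congr 1
  apply tsum_congr
  intro i
  have h1 : n + (i+1) = (n+1) + i := by omega
  have h2 : (-((n:ℤ) + ((i+1:ℕ):ℤ))) = -(((n+1:ℕ):ℤ) + (i:ℤ)) := by push_cast; ring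
  rw [h1, h2]

lemma binTail_compl (a : ℕ → ℕ) (ha : ∀ i, a i ≤ 1) (n : ℕ) :
    binTail a n + binTail (fun i => 1 - a i) n = 2 ^ (-(n:ℤ) + 1) := by
  unfold binTail
  rw [← Summable.tsum_add (binTail_summable a ha n)
      (binTail_summable _ (fun i => Nat.sub_le 1 (a i)) n)]
  rw [← binTail_tsum_pow n]
  apply tsum_congr; intro i
  have h1 : a (n+i) + (1 - a (n+i)) = 1 := by have := ha (n+i); omega
  have h2 : ((a (n+i):ℝ)) + ((1 - a (n+i) : ℕ) : ℝ) = 1 := by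
    exact_mod_cast congrArg (Nat.cast : ℕ → ℝ) h1
  rw [← add_mul, h2, one_mul]

lemma sinh_key (s x : ℝ) : Real.sinh x * Real.sinh s =
    Real.sinh (2*s - x) * Real.sinh s - Real.sinh (s - x) * Real.sinh (2*s) := by
  simp only [Real.sinh_eq, Real.exp_sub, Real.exp_neg, Real.exp_add, two_mul]
  have h1 := Real.exp_ne_zero s; have h2 := Real.exp_ne_zero x
  field_simp
  ring

lemma div_key (c s x : ℝ) (hs : 0 < s) :
    c * Real.sinh x / Real.sinh (2*s) =
      c * Real.sinh (2*s - x) / Real.sinh (2*s) - c * Real.sinh (s - x) / Real.sinh s := by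
  have h1 : Real.sinh s ≠ 0 := Real.sinh_ne_zero.mpr hs.ne'
  have h2 : Real.sinh (2*s) ≠ 0 := Real.sinh_ne_zero.mpr (by positivity)
  field_simp
  linear_combination c * sinh_key s x

lemma div_key' (c s x : ℝ) (hs : 0 < s) :
    Real.sinh x * c / Real.sinh (2*s) =
      Real.sinh (2*s - x) * c / Real.sinh (2*s) - Real.sinh (s - x) * c / Real.sinh s := by
  rw [mul_comm (Real.sinh x), mul_comm (Real.sinh (2*s - x)), mul_comm (Real.sinh (s - x))]
  exact div_key c s x hs

lemma step (α : ℝ) (hα : 0 < α) (a b : ℕ → ℕ) (ha : ∀ i, a i ≤ 1) (hb : ∀ i, b i ≤ 1)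
    (n : ℕ) (hn : a n = b n) :
    uSeq α a b n / Real.sinh (α * 2 ^ (-(n : ℤ) + 1)) =
      vSeq α a b n / Real.sinh (α * 2 ^ (-(n : ℤ) + 1)) -
      vSeq α a b (n+1) / Real.sinh (α * 2 ^ (-((n+1 : ℕ) : ℤ) + 1)) := by
  have hpow : α * 2 ^ (-(n:ℤ) + 1) = 2 * (α * 2 ^ (-(n:ℤ))) := by
    rw [zpow_add₀ (two_ne_zero : (2:ℝ) ≠ 0)]; ring
  have hpow2 : α * 2 ^ (-((n+1:ℕ):ℤ) + 1) = α * 2 ^ (-(n:ℤ)) := by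
    have : (-((n+1:ℕ):ℤ) + 1) = -(n:ℤ) := by push_cast; ring
    rw [this]
  have hc : ∀ c : ℕ → ℕ, (∀ i, c i ≤ 1) →
      binTail c (n+1) + binTail (fun i => 1 - c i) (n+1) = 2 ^ (-(n:ℤ)) := by
    intro c hc1
    rw [binTail_compl c hc1 (n+1)]
    congr 1; push_cast; ring
  have hspos : 0 < α * 2 ^ (-(n:ℤ)) := by positivity
  by_cases h : a n = 0
  · have hb0 : b n = 0 := by omega
    unfold uSeq vSeq
    rw [if_pos h]
    rw [binTail_split a ha n, binTail_split (fun i => 1 - b i) (fun i => Nat.sub_le 1 (b i)) n]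
    simp only [h, hb0]
    have hBbar : binTail (fun i => 1 - b i) (n+1) = 2 ^ (-(n:ℤ)) - binTail b (n+1) := by
      have := hc b hb; linarith
    rw [hBbar, hpow, hpow2]
    have e1 : α * (((0:ℕ):ℝ) * 2^(-(n:ℤ)) + binTail a (n+1)) = α * binTail a (n+1) := by
      push_cast; ring
    have e2 : α * (((1 - 0:ℕ):ℝ) * 2^(-(n:ℤ)) + (2^(-(n:ℤ)) - binTail b (n+1))) =
        2 * (α * 2^(-(n:ℤ))) - α * binTail b (n+1) := by push_cast; ring
    have e3 : α * (2^(-(n:ℤ)) - binTail b (n+1)) =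
        α * 2^(-(n:ℤ)) - α * binTail b (n+1) := by ring
    rw [e1, e2, e3]
    exact div_key _ _ _ hspos
  · have ha1 : a n = 1 := by have := ha n; omega
    have hb1 : b n = 1 := by omega
    unfold uSeq vSeq
    rw [if_neg h]
    rw [binTail_split a ha n, binTail_split (fun i => 1 - b i) (fun i => Nat.sub_le 1 (b i)) n]
    simp only [ha1, hb1]
    have hAbar : binTail a (n+1) = 2 ^ (-(n:ℤ)) - binTail (fun i => 1 - a i) (n+1) := by
      have := hc a ha; linarith
    rw [hAbar, hpow, hpow2]
    have e1 : α * (((1:ℕ):ℝ) * 2^(-(n:ℤ)) + (2^(-(n:ℤ)) - binTail (fun i => 1 - a i) (n+1))) =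
        2 * (α * 2^(-(n:ℤ))) - α * binTail (fun i => 1 - a i) (n+1) := by push_cast; ring
    have e2 : α * (((1 - 1:ℕ):ℝ) * 2^(-(n:ℤ)) + binTail (fun i => 1 - b i) (n+1)) =
        α * binTail (fun i => 1 - b i) (n+1) := by norm_num
    have e3 : α * (2^(-(n:ℤ)) - binTail (fun i => 1 - a i) (n+1)) =
        α * 2^(-(n:ℤ)) - α * binTail (fun i => 1 - a i) (n+1) := by ring
    rw [e1, e2, e3]
    exact div_key' _ _ _ hspos


/-- If `a_n = b_n` for all `1 ≤ n ≤ N₀ − 1` (with `N₀ ≥ 2`), then the telescoping identity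
`Σ_{n=1}^{N₀−1} u_n / sinh(α·2^(−n+1)) = v_1 / sinh(α) − v_{N₀} / sinh(α·2^(−N₀+1))` holds. -/
theorem u_telescoping (α : ℝ) (hα : 0 < α) (a b : ℕ → ℕ)
    (ha : ∀ i, a i ≤ 1) (hb : ∀ i, b i ≤ 1) (N₀ : ℕ) (hN₀ : 2 ≤ N₀)
    (hab : ∀ n, 1 ≤ n → n ≤ N₀ - 1 → a n = b n) :
    ∑ n ∈ Finset.Icc 1 (N₀ - 1), uSeq α a b n / Real.sinh (α * 2 ^ (-(n : ℤ) + 1)) =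
      vSeq α a b 1 / Real.sinh α - vSeq α a b N₀ / Real.sinh (α * 2 ^ (-(N₀ : ℤ) + 1)) := by
  set f : ℕ → ℝ := fun n => vSeq α a b n / Real.sinh (α * 2 ^ (-(n : ℤ) + 1)) with hf
  have hsum : ∑ n ∈ Finset.Icc 1 (N₀ - 1), uSeq α a b n / Real.sinh (α * 2 ^ (-(n : ℤ) + 1)) =
      ∑ n ∈ Finset.Icc 1 (N₀ - 1), (f n - f (n+1)) := by
    apply Finset.sum_congr rfl
    intro n hn
    rw [Finset.mem_Icc] at hn
    exact step α hα a b ha hb n (hab n hn.1 hn.2)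
  rw [hsum]
  rw [show Finset.Icc 1 (N₀ - 1) = Finset.Ico 1 N₀ from by
    ext x; simp only [Finset.mem_Icc, Finset.mem_Ico]; omega]
  rw [Finset.sum_Ico_eq_sum_range]
  have := Finset.sum_range_sub' (fun i => f (1 + i)) (N₀ - 1)
  simp only [← add_assoc] at this
  rw [this]
  have h1 : (1 : ℕ) + 0 = 1 := rfl
  have h2 : 1 + (N₀ - 1) = N₀ := by omega
  rw [h1, h2, hf]
  have h3 : α * 2 ^ (-(1:ℤ) + 1) = α := by norm_num
  simp only [Nat.cast_one, h3]
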